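/- The double integral ∫_{v=0}^{π/2} ∫_{u=π/2}^{π−v} sin(u)·(cos(v) − cos(u)) / (√(−cos(u))·√(cos(v) + cos(u))) du dv equals 3π/2. -/

import Mathlib

open Real

/-- Antiderivative of the inner integrand. -/
noncomputable def Fuv (c : ℝ) (u : ℝ) : ℝ :=
  3 * c / 2 * Real.arcsin ((-2 * Real.cos u - c) / c)
    - Real.sqrt (-Real.cos u * (c + Real.cos u))

lemma Fuv_cont (c : ℝ) : Continuous (Fuv c) := by
  unfold Fuv
  apply Continuous.sub
  · exact continuous_const.mul (Real.continuous_arcsin.comp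
      (((continuous_const.mul continuous_cos).sub continuous_const).div_const c))
  · exact Real.continuous_sqrt.comp (continuous_cos.neg.mul (continuous_const.add continuous_cos))

lemma Fuv_deriv (c : ℝ) (hc : 0 < c) (u : ℝ) (h1 : 0 < -Real.cos u)
    (h2 : 0 < c + Real.cos u) :
    HasDerivAt (Fuv c)
      (Real.sin u * (c - Real.cos u) /
        (Real.sqrt (-Real.cos u) * Real.sqrt (c + Real.cos u))) u := by
  have hg : HasDerivAt (fun u => (-2 * Real.cos u - c) / c) (2 * Real.sin u / c) u := by
    have : HasDerivAt (fun u => -2 * Real.cos u - c) (2 * Real.sin u) u := by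
      have := ((Real.hasDerivAt_cos u).const_mul (-2)).sub_const c
      exact this.congr_deriv (by ring)
    exact this.div_const c
  have hne1 : (-2 * Real.cos u - c) / c ≠ -1 := by
    intro h
    rw [div_eq_iff hc.ne'] at h
    nlinarith
  have hne1' : (-2 * Real.cos u - c) / c ≠ 1 := by
    intro h
    rw [div_eq_iff hc.ne'] at h
    nlinarith
  have harcsin := (Real.hasDerivAt_arcsin hne1 hne1').comp u hg
  have hh : HasDerivAt (fun u => -Real.cos u * (c + Real.cos u))
      (Real.sin u * (c + Real.cos u) + -Real.cos u * -Real.sin u) u := by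
    have h3 : HasDerivAt (fun u => -Real.cos u) (Real.sin u) u := by
      have := (Real.hasDerivAt_cos u).neg
      exact this.congr_deriv (by ring)
    have h4 : HasDerivAt (fun u => c + Real.cos u) (-Real.sin u) u :=
      (Real.hasDerivAt_cos u).const_add c
    exact h3.mul h4
  have hhne : -Real.cos u * (c + Real.cos u) ≠ 0 := by positivity
  have hsqrt := (Real.hasDerivAt_sqrt hhne).comp u hh
  have hF := (harcsin.const_mul (3 * c / 2)).sub hsqrt
  refine hF.congr_deriv ?_
  have s1 : Real.sqrt (-Real.cos u) ^ 2 = -Real.cos u := Real.sq_sqrt h1.le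
  have s2 : Real.sqrt (c + Real.cos u) ^ 2 = c + Real.cos u := Real.sq_sqrt h2.le
  have s1p : 0 < Real.sqrt (-Real.cos u) := Real.sqrt_pos.mpr h1
  have s2p : 0 < Real.sqrt (c + Real.cos u) := Real.sqrt_pos.mpr h2
  have e1 : Real.sqrt (-Real.cos u * (c + Real.cos u))
      = Real.sqrt (-Real.cos u) * Real.sqrt (c + Real.cos u) := Real.sqrt_mul h1.le _
  have e2 : Real.sqrt (1 - ((-2 * Real.cos u - c) / c) ^ 2)
      = 2 * (Real.sqrt (-Real.cos u) * Real.sqrt (c + Real.cos u)) / c := by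
    rw [show 1 - ((-2 * Real.cos u - c) / c) ^ 2
        = (2 * (Real.sqrt (-Real.cos u) * Real.sqrt (c + Real.cos u)) / c) ^ 2 by
      have : (2 * (Real.sqrt (-Real.cos u) * Real.sqrt (c + Real.cos u)) / c) ^ 2
          = 4 * (-Real.cos u) * (c + Real.cos u) / c ^ 2 := by
        rw [div_pow, mul_pow, mul_pow, s1, s2]; ring
      rw [this]
      field_simp
      ring]
    exact Real.sqrt_sq (by positivity)
  simp only [Function.comp_def, e1, e2]
  field_simp
  ring

lemma inner_integral (v : ℝ) (hv0 : 0 ≤ v) (hv : v < π / 2) :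
    (∫ u in (π / 2)..(π - v),
      Real.sin u * (Real.cos v - Real.cos u) /
        (Real.sqrt (-Real.cos u) * Real.sqrt (Real.cos v + Real.cos u)))
    = 3 * π / 2 * Real.cos v := by
  have hπ := Real.pi_pos
  set c := Real.cos v with hcdef
  have hc : 0 < c := Real.cos_pos_of_mem_Ioo ⟨by linarith, hv⟩
  have hab : π / 2 ≤ π - v := by linarith
  have key : ∀ u ∈ Set.Ioo (π / 2) (π - v), 0 < -Real.cos u ∧ 0 < c + Real.cos u := by
    intro u hu
    constructor
    · have := Real.cos_neg_of_pi_div_two_lt_of_lt hu.1 (by linarith [hu.2])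
      linarith
    · have : Real.cos (π - v) < Real.cos u :=
        Real.cos_lt_cos_of_nonneg_of_le_pi (by linarith [hu.1]) (by linarith) hu.2
      rw [Real.cos_pi_sub] at this
      linarith
  have hderiv : ∀ u ∈ Set.Ioo (π / 2) (π - v),
      HasDerivAt (Fuv c)
        (Real.sin u * (c - Real.cos u) /
          (Real.sqrt (-Real.cos u) * Real.sqrt (c + Real.cos u))) u := by
    intro u hu
    exact Fuv_deriv c hc u (key u hu).1 (key u hu).2
  have hnonneg : ∀ u ∈ Set.Ioo (π / 2) (π - v),
      0 ≤ Real.sin u * (c - Real.cos u) /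
          (Real.sqrt (-Real.cos u) * Real.sqrt (c + Real.cos u)) := by
    intro u hu
    have hs : 0 ≤ Real.sin u :=
      Real.sin_nonneg_of_nonneg_of_le_pi (by linarith [hu.1]) (by linarith [hu.2])
    have := (key u hu).1
    apply div_nonneg (mul_nonneg hs (by linarith)) (by positivity)
  have hint : IntervalIntegrable (fun u => Real.sin u * (c - Real.cos u) /
      (Real.sqrt (-Real.cos u) * Real.sqrt (c + Real.cos u))) MeasureTheory.volume
      (π / 2) (π - v) := by
    apply intervalIntegral.intervalIntegrable_deriv_of_nonneg ((Fuv_cont c).continuousOn)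
    · intro u hu
      rw [min_eq_left hab, max_eq_right hab] at hu
      exact hderiv u hu
    · intro u hu
      rw [min_eq_left hab, max_eq_right hab] at hu
      exact hnonneg u hu
  have := intervalIntegral.integral_eq_sub_of_hasDeriv_right_of_le hab
    ((Fuv_cont c).continuousOn)
    (fun u hu => (hderiv u hu).hasDerivWithinAt) hint
  rw [this]
  have e1 : Fuv c (π / 2) = -(3 * c * π / 4) := by
    unfold Fuv
    rw [Real.cos_pi_div_two]
    rw [show (-2 * 0 - c) / c = -1 by field_simp; ring]
    rw [Real.arcsin_neg_one]
    norm_num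
    ring
  have e2 : Fuv c (π - v) = 3 * c * π / 4 := by
    unfold Fuv
    rw [Real.cos_pi_sub]
    rw [show (-2 * -Real.cos v - c) / c = 1 by rw [← hcdef]; field_simp; ring]
    rw [Real.arcsin_one]
    rw [show -(-Real.cos v) * (c + -Real.cos v) = 0 by rw [hcdef]; ring]
    rw [Real.sqrt_zero]
    ring
  rw [e1, e2]; ring

/-- The double integral arising from the perimeter density of a random spherical
triangle at π, after the change of variables u = κ+ρ, v = κ−ρ, equals 3π/2. -/
theorem uv_integral_eq :
    (∫ v in (0:ℝ)..(π / 2), ∫ u in (π / 2)..(π - v),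
      Real.sin u * (Real.cos v - Real.cos u) /
        (Real.sqrt (-Real.cos u) * Real.sqrt (Real.cos v + Real.cos u)))
    = 3 * π / 2 := by
  have hπ := Real.pi_pos
  have hcongr : Set.EqOn
      (fun v => ∫ u in (π / 2)..(π - v),
        Real.sin u * (Real.cos v - Real.cos u) /
          (Real.sqrt (-Real.cos u) * Real.sqrt (Real.cos v + Real.cos u)))
      (fun v => 3 * π / 2 * Real.cos v) (Set.uIcc (0:ℝ) (π / 2)) := by
    intro v hv
    rw [Set.uIcc_of_le (by linarith : (0:ℝ) ≤ π / 2)] at hv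
    rcases eq_or_lt_of_le hv.2 with h | h
    · simp only [h]
      rw [show π - π / 2 = π / 2 by ring, intervalIntegral.integral_same,
        Real.cos_pi_div_two]
      ring
    · exact inner_integral v hv.1 h
  rw [intervalIntegral.integral_congr hcongr, intervalIntegral.integral_const_mul,
    integral_cos]
  simp
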